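/- The rule-based drastic inconsistency measure I^RB_d satisfies Rule Consistency: I^RB_d(B) = 0 if and only if for all consistent subsets F' of the facts of B, R(B) ∪ F' is consistent. -/
import Mathlib


open scoped Classical

/-- A rule over atoms `A`: literals are pairs (atom, sign). -/
structure Rule (A : Type*) where
  body : Finset (A × Bool)
  head : A × Bool
deriving DecidableEq

abbrev RuleBase (A : Type*) := Finset (Rule A)

variable {A : Type*}

/-- The complement of a literal. -/
def litCompl (l : A × Bool) : A × Bool := (l.1, !l.2)

/-- The fact with head `l` (empty body). -/
def factR (l : A × Bool) : Rule A := ⟨∅, l⟩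

/-- The facts (empty-body rules) of a rule base. -/
noncomputable def facts [DecidableEq A] (B : RuleBase A) : RuleBase A :=
  B.filter (fun r => r.body = ∅)

/-- The proper (non-fact) rules of a rule base. -/
noncomputable def properRules [DecidableEq A] (B : RuleBase A) : RuleBase A :=
  B.filter (fun r => r.body ≠ ∅)

/-- A set of literals is closed w.r.t. a rule base. -/
def Closed (B : RuleBase A) (M : Set (A × Bool)) : Prop :=
  ∀ r ∈ B, (↑r.body ⊆ M) → r.head ∈ M

/-- The minimal model: the smallest closed set of literals. -/
def minModel (B : RuleBase A) : Set (A × Bool) :=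
  {l | ∀ M : Set (A × Bool), Closed B M → l ∈ M}

/-- A set of literals is consistent if it contains no complementary pair. -/
def ConsistentLits (M : Set (A × Bool)) : Prop :=
  ¬ ∃ a : A, (a, true) ∈ M ∧ (a, false) ∈ M

/-- A rule base is consistent if its minimal model is consistent. -/
def Consistent (B : RuleBase A) : Prop := ConsistentLits (minModel B)

/-- The minimal inconsistent subsets of a rule base. -/
def MI (B : RuleBase A) : Set (RuleBase A) :=
  { M | M ⊆ B ∧ ¬ Consistent M ∧ ∀ M' ⊂ M, Consistent M' }

/-- `M` contains a complementary pair of facts. -/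
def hasComplFactPair (M : RuleBase A) : Prop :=
  ∃ a : A, factR (a, true) ∈ M ∧ factR (a, false) ∈ M

/-- Minimal inconsistent subsets containing no complementary pair of facts. -/
def MIF (B : RuleBase A) : Set (RuleBase A) :=
  { M ∈ MI B | ¬ hasComplFactPair M }

/-- A formula is free in a rule base if it belongs to no minimal inconsistent subset. -/
def Free (r : Rule A) (B : RuleBase A) : Prop := ∀ M ∈ MI B, r ∉ M

/-- Rule consistency: the rules together with any consistent set of facts are consistent. -/
def RuleConsistent [DecidableEq A] (B : RuleBase A) : Prop :=
  ∀ F' ⊆ facts B, Consistent F' → Consistent (properRules B ∪ F')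

/-- The drastic inconsistency measure. -/
noncomputable def Idr (B : RuleBase A) : ℕ := if Consistent B then 0 else 1

/-- The rule-based drastic inconsistency measure. -/
noncomputable def IRBd (B : RuleBase A) : ℕ := if MIF B = ∅ then 0 else 1

/-- The rule-based MI-inconsistency measure. -/
noncomputable def IRBMI (B : RuleBase A) : ℕ := (MIF B).ncard

/-- The rule-based problematic inconsistency measure: number of distinct
    non-fact rules occurring in some element of `MIF B`. -/
noncomputable def IRBp (B : RuleBase A) : ℕ :=
  {r : Rule A | r.body ≠ ∅ ∧ ∃ M ∈ MIF B, r ∈ M}.ncard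

/-- Three truth values. -/
inductive TV | t | b | f
deriving DecidableEq

def TV.negv : TV → TV
  | .t => .f
  | .f => .t
  | .b => .b

/-- Value of a literal under a three-valued interpretation. -/
def litVal (v : A → TV) (l : A × Bool) : TV :=
  if l.2 then v l.1 else (v l.1).negv

/-- Designated truth values. -/
def TV.des : TV → Prop
  | .f => False
  | _ => True

/-- Three-valued satisfaction of a rule. -/
def sat3 (v : A → TV) (r : Rule A) : Prop :=
  (∀ l ∈ r.body, (litVal v l).des) → (litVal v r.head).des

/-- The rule-based contension inconsistency measure. -/
noncomputable def IRBc (B : RuleBase A) : ℕ :=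
  sInf { n : ℕ | ∃ v : A → TV,
    (∀ M ∈ MIF B, ∀ r ∈ M, sat3 v r) ∧ n = {a : A | v a = TV.b}.ncard }

/-- The payoff of `α` in coalition `C` (w.r.t. rule base `B` and measure `I`). -/
noncomputable def CoalPayoff [DecidableEq A] (I : RuleBase A → ℝ) (B : RuleBase A)
    (α : Rule A) (C : RuleBase A) : ℝ :=
  ((Nat.factorial (C.card - 1) * Nat.factorial (B.card - C.card) : ℕ) : ℝ)
    / ((Nat.factorial B.card : ℕ) : ℝ) * (I C - I (C.erase α))

/-- The additional payoff shifted from facts to non-free rules. -/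
noncomputable def AddPayoff [DecidableEq A] (I : RuleBase A → ℝ) (B : RuleBase A)
    (r : Rule A) (C : RuleBase A) : ℝ :=
  if Free r C then 0
  else (∑ f ∈ C.filter (fun x => x.body = ∅), CoalPayoff I B f C)
        / ((C.filter (fun x => x.body ≠ ∅ ∧ ¬ Free x C)).card : ℝ)

/-- The adjusted Shapley inconsistency value. -/
noncomputable def Sstar [DecidableEq A] (I : RuleBase A → ℝ) (B : RuleBase A)
    (α : Rule A) : ℝ :=
  if α.body = ∅ then 0
  else ∑ C ∈ B.powerset, (CoalPayoff I B α C + AddPayoff I B α C)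

lemma minModel_mono {B₁ B₂ : RuleBase A} (h : B₁ ⊆ B₂) :
    minModel B₁ ⊆ minModel B₂ := by
  intro l hl M hM
  exact hl M (fun r hr => hM r (h hr))

lemma consistent_mono {B₁ B₂ : RuleBase A} (h : B₁ ⊆ B₂) (hc : Consistent B₂) :
    Consistent B₁ := by
  intro ⟨a, h1, h2⟩
  exact hc ⟨a, minModel_mono h h1, minModel_mono h h2⟩

lemma fact_head_mem {B : RuleBase A} {l : A × Bool} (h : factR l ∈ B) :
    l ∈ minModel B := by
  intro M hM
  exact hM _ h (by simp [factR])

lemma exists_min_inconsistent (B : RuleBase A) (h : ¬ Consistent B) :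
    ∃ M ⊆ B, ¬ Consistent M ∧ ∀ M' ⊂ M, Consistent M' := by
  induction B using Finset.strongInductionOn with
  | _ B ih =>
    by_cases hall : ∀ M' ⊂ B, Consistent M'
    · exact ⟨B, Finset.Subset.refl B, h, hall⟩
    · push_neg at hall
      obtain ⟨M', hM', hM'c⟩ := hall
      obtain ⟨M, hM1, hM2, hM3⟩ := ih M' hM' hM'c
      exact ⟨M, hM1.trans hM'.subset, hM2, hM3⟩

theorem stmt3 [DecidableEq A] (B : RuleBase A) :
    IRBd B = 0 ↔ RuleConsistent B := by
  have hd : IRBd B = 0 ↔ MIF B = ∅ := by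
    unfold IRBd
    split <;> simp_all
  rw [hd]
  constructor
  · -- MIF B = ∅ → RuleConsistent B
    intro hmif F' hF' hF'c
    by_contra hInc
    obtain ⟨M, hM1, hM2, hM3⟩ := exists_min_inconsistent _ hInc
    have hMB : M ⊆ B := by
      intro r hr
      rcases Finset.mem_union.mp (hM1 hr) with h | h
      · exact (Finset.mem_filter.mp h).1
      · exact (Finset.mem_filter.mp (hF' h)).1
    have : M ∈ MIF B := by
      refine ⟨⟨hMB, hM2, hM3⟩, ?_⟩
      rintro ⟨a, ha1, ha2⟩
      -- complementary facts must be in F', contradicting consistency of F'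
      have hfacts : ∀ b : Bool, factR (a, b) ∈ M → factR (a, b) ∈ F' := by
        intro b hb
        rcases Finset.mem_union.mp (hM1 hb) with h | h
        · exact absurd rfl (Finset.mem_filter.mp h).2
        · exact h
      exact hF'c ⟨a, fact_head_mem (hfacts true ha1),
        fact_head_mem (hfacts false ha2)⟩
    rw [hmif] at this
    exact this
  · -- RuleConsistent B → MIF B = ∅
    intro hrc
    ext M
    simp only [Set.mem_empty_iff_false, iff_false]
    rintro ⟨⟨hMB, hMinc, _⟩, hnopair⟩
    set F' : RuleBase A := M.filter (fun r => r.body = ∅) with hF'def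
    have hF'sub : F' ⊆ facts B := by
      intro r hr
      have := Finset.mem_filter.mp hr
      exact Finset.mem_filter.mpr ⟨hMB this.1, this.2⟩
    have hF'c : Consistent F' := by
      rintro ⟨a, h1, h2⟩
      -- minModel F' ⊆ heads of F'
      have hclosed : Closed F' {l | factR l ∈ F'} := by
        intro r hr _
        have hm := Finset.mem_filter.mp hr
        have : r = factR r.head := by
          cases r; simp_all [factR]
        show factR r.head ∈ F'
        rw [← this]
        exact hr
      have h1' := h1 _ hclosed
      have h2' := h2 _ hclosed
      exact hnopair ⟨a, (Finset.mem_filter.mp h1').1, (Finset.mem_filter.mp h2').1⟩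
    have hcons := hrc F' hF'sub hF'c
    apply hMinc
    refine consistent_mono ?_ hcons
    intro r hr
    by_cases hb : r.body = ∅
    · exact Finset.mem_union_right _ (Finset.mem_filter.mpr ⟨hr, hb⟩)
    · exact Finset.mem_union_left _ (Finset.mem_filter.mpr ⟨hMB hr, hb⟩)
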